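/- Let Ω₀, Ω₁ ⊂ ℝⁿ be compact sets, and let f, g be real-valued C² functions defined on neighborhoods of Ω₀, Ω₁ respectively, with g(y) > f(x) for all (x,y) ∈ Ω₀ × Ω₁. Let c(x,y) = √((f(x) − g(y))² + |x − y|²). Suppose there are constants α₁, α₂ > 0 with 1 − α₁ (2 + α₂² + α₁) > 0 such that for all (x,y) ∈ Ω₀ × Ω₁: |(x − y)·∇g(y)| ≤ α₁ (g(y) − f(x)), |(x − y)·∇f(x)| ≤ α₁ (g(y) − f(x)), and |∇f(x)| + |∇g(y)| ≤ α₂. Then det (∂²c/∂xᵢ∂y_j)(x,y) ≠ 0 for every (x,y) ∈ Ω₀ × Ω₁. -/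

import Mathlib

open scoped RealInnerProductSpace

section Helpers
variable {n : ℕ}
local notation "E" => EuclideanSpace ℝ (Fin n)

lemma clm_eval_sum {n : ℕ} (L : EuclideanSpace ℝ (Fin n) →L[ℝ] ℝ) (v : EuclideanSpace ℝ (Fin n)) :
    L v = ∑ i, v i * L (EuclideanSpace.single i 1) := by
  have hv : ∑ i, v i • EuclideanSpace.single i (1:ℝ) = v := by
    simpa [EuclideanSpace.basisFun_apply] using (EuclideanSpace.basisFun (Fin n) ℝ).sum_repr v
  conv_lhs => rw [← hv]
  rw [map_sum]
  simp [smul_eq_mul]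

lemma grad_eval {n : ℕ} (f : EuclideanSpace ℝ (Fin n) → ℝ) (x v : EuclideanSpace ℝ (Fin n)) :
    ⟪v, gradient f x⟫ = fderiv ℝ f x v := by
  rw [real_inner_comm, gradient, InnerProductSpace.toDual_symm_apply]


lemma sq_norm_fderiv (w : E) (z : E) :
    HasFDerivAt (fun y' : E => ‖w - y'‖ ^ 2)
      ((fderivInnerCLM ℝ (w - z, w - z)).comp
        ((-(ContinuousLinearMap.id ℝ E)).prod (-(ContinuousLinearMap.id ℝ E)))) z := by
  have hid : HasFDerivAt (fun y' : E => w - y') (-(ContinuousLinearMap.id ℝ E)) z :=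
    (hasFDerivAt_id z).const_sub w
  have h := hid.inner ℝ hid
  simpa only [real_inner_self_eq_norm_sq] using h

lemma inner_deriv_formula (f g : E → ℝ) (y : E) (Lg : E →L[ℝ] ℝ)
    (hgd : HasFDerivAt g Lg y) (x' : E) (hlt : f x' < g y) (j : Fin n) :
    fderiv ℝ (fun y' => Real.sqrt ((f x' - g y') ^ 2 + ‖x' - y'‖ ^ 2)) y
        (EuclideanSpace.single j 1)
      = -(((f x' - g y) * Lg (EuclideanSpace.single j 1)
            + ⟪x' - y, EuclideanSpace.single j 1⟫)
          / Real.sqrt ((f x' - g y) ^ 2 + ‖x' - y‖ ^ 2)) := by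
  have h1 : HasFDerivAt (fun y' => f x' - g y') (-Lg) y := hgd.const_sub (f x')
  have h2 : HasFDerivAt (fun y' => (f x' - g y') ^ 2) ((2 * (f x' - g y)) • (-Lg)) y := by
    have h := h1.mul h1
    have : (f x' - g y) • (-Lg) + (f x' - g y) • (-Lg) = (2 * (f x' - g y)) • (-Lg) := by
      ext v; simp; ring
    rw [this] at h
    exact h.congr_of_eventuallyEq (Filter.Eventually.of_forall fun z => by simp [pow_two])
  have h3 := sq_norm_fderiv x' y
  have h4 := h2.add h3
  have hpos : (0:ℝ) < (f x' - g y) ^ 2 + ‖x' - y‖ ^ 2 := by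
    have : f x' - g y ≠ 0 := sub_ne_zero.2 (ne_of_lt hlt)
    positivity
  have h5 := h4.sqrt hpos.ne'
  simp only [Pi.add_apply] at h5
  rw [h5.fderiv]
  have hr : Real.sqrt ((f x' - g y) ^ 2 + ‖x' - y‖ ^ 2) ≠ 0 :=
    (Real.sqrt_pos.2 hpos).ne'
  simp only [ContinuousLinearMap.smul_apply, ContinuousLinearMap.add_apply,
    ContinuousLinearMap.coe_comp', Function.comp_apply, ContinuousLinearMap.prod_apply,
    ContinuousLinearMap.neg_apply, ContinuousLinearMap.coe_id', id_eq,
    fderivInnerCLM_apply, inner_neg_right, inner_neg_left, smul_eq_mul]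
  rw [real_inner_comm (EuclideanSpace.single j 1) (x' - y)]
  field_simp
  ring


lemma sq_norm_fderiv' (y : E) (x : E) :
    HasFDerivAt (fun x' : E => ‖x' - y‖ ^ 2)
      ((fderivInnerCLM ℝ (x - y, x - y)).comp
        ((ContinuousLinearMap.id ℝ E).prod (ContinuousLinearMap.id ℝ E))) x := by
  have hid : HasFDerivAt (fun x' : E => x' - y) (ContinuousLinearMap.id ℝ E) x :=
    (hasFDerivAt_id x).sub_const y
  simpa only [real_inner_self_eq_norm_sq] using hid.inner ℝ hid

lemma outer_deriv_formula (f : E → ℝ) (c : ℝ) (y x : E) (Lf : E →L[ℝ] ℝ)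
    (hfd : HasFDerivAt f Lf x) (hlt : f x < c) (Bj : ℝ) (j i : Fin n) :
    fderiv ℝ (fun x' => -(((f x' - c) * Bj + ⟪x' - y, EuclideanSpace.single j 1⟫)
        / Real.sqrt ((f x' - c) ^ 2 + ‖x' - y‖ ^ 2))) x (EuclideanSpace.single i 1)
      = -((Real.sqrt ((f x - c) ^ 2 + ‖x - y‖ ^ 2))⁻¹ *
          ((if i = j then (1:ℝ) else 0)
            + Lf (EuclideanSpace.single i 1) * Bj
            - ((f x - c) * Lf (EuclideanSpace.single i 1) + ⟪x - y, EuclideanSpace.single i 1⟫)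
              * ((f x - c) * Bj + ⟪x - y, EuclideanSpace.single j 1⟫)
              / ((f x - c) ^ 2 + ‖x - y‖ ^ 2))) := by
  set r := Real.sqrt ((f x - c) ^ 2 + ‖x - y‖ ^ 2) with hrdef
  have hpos : (0:ℝ) < (f x - c) ^ 2 + ‖x - y‖ ^ 2 := by
    have : f x - c ≠ 0 := sub_ne_zero.2 (ne_of_lt hlt)
    positivity
  have hrpos : 0 < r := Real.sqrt_pos.2 hpos
  have hrsq : r ^ 2 = (f x - c) ^ 2 + ‖x - y‖ ^ 2 := Real.sq_sqrt hpos.le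
  have hid : HasFDerivAt (fun x' : E => x' - y) (ContinuousLinearMap.id ℝ E) x :=
    (hasFDerivAt_id x).sub_const y
  -- numerator
  have hsub : HasFDerivAt (fun x' => f x' - c) Lf x := by simpa using hfd.sub_const c
  have hN : HasFDerivAt (fun x' => (f x' - c) * Bj + ⟪x' - y, EuclideanSpace.single j 1⟫)
      (Lf.smulRight Bj +
        (fderivInnerCLM ℝ (x - y, EuclideanSpace.single j 1)).comp
          ((ContinuousLinearMap.id ℝ E).prod 0)) x := by
    exact (hsub.mul_const' Bj).add (hid.inner ℝ (hasFDerivAt_const (EuclideanSpace.single j 1) x))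
  -- denominator sqrt
  have h2 : HasFDerivAt (fun x' => (f x' - c) ^ 2) ((2 * (f x - c)) • Lf) x := by
    have h := hsub.mul hsub
    have e : (f x - c) • Lf + (f x - c) • Lf = (2 * (f x - c)) • Lf := by
      ext v; simp; ring
    rw [e] at h
    exact h.congr_of_eventuallyEq (Filter.Eventually.of_forall fun z => by simp [pow_two])
  have h4 := h2.add (sq_norm_fderiv' y x)
  have h5 := h4.sqrt hpos.ne'
  have hinv : HasFDerivAt (fun x' => (Real.sqrt ((f x' - c) ^ 2 + ‖x' - y‖ ^ 2))⁻¹)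
      ((-(r ^ 2)⁻¹) • ((1 / (2 * r)) • ((2 * (f x - c)) • Lf +
        (fderivInnerCLM ℝ (x - y, x - y)).comp
          ((ContinuousLinearMap.id ℝ E).prod (ContinuousLinearMap.id ℝ E))))) x := by
    exact (hasDerivAt_inv hrpos.ne').comp_hasFDerivAt x h5
  have hG := ((hN.mul hinv).neg)
  simp only [Pi.neg_def, Pi.mul_def] at hG
  have : (fun x' => -(((f x' - c) * Bj + ⟪x' - y, EuclideanSpace.single j 1⟫)
        / Real.sqrt ((f x' - c) ^ 2 + ‖x' - y‖ ^ 2)))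
      = fun x' => -(((f x' - c) * Bj + ⟪x' - y, EuclideanSpace.single j 1⟫)
        * (Real.sqrt ((f x' - c) ^ 2 + ‖x' - y‖ ^ 2))⁻¹) := by
    funext z; rw [div_eq_mul_inv]
  rw [this, hG.fderiv]
  simp only [ContinuousLinearMap.neg_apply, ContinuousLinearMap.add_apply,
    ContinuousLinearMap.smul_apply, ContinuousLinearMap.coe_comp', Function.comp_apply,
    ContinuousLinearMap.prod_apply, ContinuousLinearMap.coe_id', id_eq,
    ContinuousLinearMap.smulRight_apply, ContinuousLinearMap.zero_apply,
    fderivInnerCLM_apply, smul_eq_mul, inner_zero_right]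
  have hej : ⟪EuclideanSpace.single i (1:ℝ), EuclideanSpace.single j (1:ℝ)⟫
      = (if i = j then (1:ℝ) else 0) := by
    simp [EuclideanSpace.inner_single_left, EuclideanSpace.single_apply, eq_comm]
  rw [hej, real_inner_comm (EuclideanSpace.single i 1) (x - y)]
  rw [← hrdef, ← hrsq]
  field_simp
  ring
end Helpers

set_option maxHeartbeats 1000000 in
/-- For the cost `c(x,y) = √((f(x) − g(y))² + |x − y|²)` with `f, g` of class
`C²` on neighborhoods of the compact sets `Ω₀, Ω₁` and `g > f` on `Ω₀ × Ω₁`: if there are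
constants `α₁, α₂ > 0` with `1 − α₁(2 + α₂² + α₁) > 0` such that
`|(x − y)·∇g(y)| ≤ α₁(g(y) − f(x))`, `|(x − y)·∇f(x)| ≤ α₁(g(y) − f(x))` and
`|∇f(x)| + |∇g(y)| ≤ α₂` for all `(x,y) ∈ Ω₀ × Ω₁`, then the determinant of the matrix of
mixed second partials of `c` is nonzero at every `(x,y) ∈ Ω₀ × Ω₁`. -/
theorem det_nonzero_general_g {n : ℕ}
    (Ω₀ Ω₁ : Set (EuclideanSpace ℝ (Fin n)))
    (hΩ₀ : IsCompact Ω₀) (hΩ₁ : IsCompact Ω₁)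
    (f g : EuclideanSpace ℝ (Fin n) → ℝ)
    (U V : Set (EuclideanSpace ℝ (Fin n))) (hU : IsOpen U) (hV : IsOpen V)
    (hΩU : Ω₀ ⊆ U) (hΩV : Ω₁ ⊆ V)
    (hf : ContDiffOn ℝ 2 f U) (hg : ContDiffOn ℝ 2 g V)
    (hsep : ∀ x ∈ Ω₀, ∀ y ∈ Ω₁, f x < g y)
    (α₁ α₂ : ℝ) (hα₁ : 0 < α₁) (hα₂ : 0 < α₂)
    (hsmall : 0 < 1 - α₁ * (2 + α₂ ^ 2 + α₁))
    (h₁ : ∀ x ∈ Ω₀, ∀ y ∈ Ω₁, |⟪x - y, gradient g y⟫| ≤ α₁ * (g y - f x))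
    (h₂ : ∀ x ∈ Ω₀, ∀ y ∈ Ω₁, |⟪x - y, gradient f x⟫| ≤ α₁ * (g y - f x))
    (h₃ : ∀ x ∈ Ω₀, ∀ y ∈ Ω₁, ‖gradient f x‖ + ‖gradient g y‖ ≤ α₂) :
    ∀ x ∈ Ω₀, ∀ y ∈ Ω₁,
      Matrix.det (Matrix.of fun i j : Fin n =>
        fderiv ℝ (fun x' => fderiv ℝ
            (fun y' => Real.sqrt ((f x' - g y') ^ 2 + ‖x' - y'‖ ^ 2)) y
            (EuclideanSpace.single j 1)) x (EuclideanSpace.single i 1)) ≠ 0 := by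
  intro x hx y hy
  have hxU : x ∈ U := hΩU hx
  have hyV : y ∈ V := hΩV hy
  set Lf := fderiv ℝ f x with hLfdef
  set Lg := fderiv ℝ g y with hLgdef
  have hLf : HasFDerivAt f Lf x :=
    ((hf.contDiffAt (hU.mem_nhds hxU)).differentiableAt two_ne_zero).hasFDerivAt
  have hLg : HasFDerivAt g Lg y :=
    ((hg.contDiffAt (hV.mem_nhds hyV)).differentiableAt two_ne_zero).hasFDerivAt
  have hlt : f x < g y := hsep x hx y hy
  set s : ℝ := f x - g y with hsdef
  have hs : s < 0 := sub_neg.2 hlt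
  set D : ℝ := s ^ 2 + ‖x - y‖ ^ 2 with hDdef
  have hs2 : 0 < s ^ 2 := by nlinarith
  have hDpos : 0 < D := by rw [hDdef]; nlinarith [sq_nonneg ‖x - y‖]
  set r : ℝ := Real.sqrt D with hrdef
  have hrpos : 0 < r := Real.sqrt_pos.2 hDpos
  have hrsq : r ^ 2 = D := Real.sq_sqrt hDpos.le
  set a : Fin n → ℝ := fun i => Lf (EuclideanSpace.single i 1) with hadef
  set b : Fin n → ℝ := fun j => Lg (EuclideanSpace.single j 1) with hbdef
  set q : Fin n → ℝ := fun i => ⟪x - y, EuclideanSpace.single i 1⟫ with hqdef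
  -- Step 1: entries of the matrix
  have hM : ∀ i j : Fin n,
      fderiv ℝ (fun x' => fderiv ℝ
          (fun y' => Real.sqrt ((f x' - g y') ^ 2 + ‖x' - y'‖ ^ 2)) y
          (EuclideanSpace.single j 1)) x (EuclideanSpace.single i 1)
      = -(r⁻¹ * ((if i = j then (1:ℝ) else 0) + a i * b j
          - (s * a i + q i) * (s * b j + q j) / D)) := by
    intro i j
    have hWopen : IsOpen (U ∩ f ⁻¹' Set.Iio (g y)) :=
      (hf.continuousOn).isOpen_inter_preimage hU isOpen_Iio
    have hxW : x ∈ U ∩ f ⁻¹' Set.Iio (g y) := ⟨hxU, hlt⟩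
    have heq : (fun x' => fderiv ℝ
          (fun y' => Real.sqrt ((f x' - g y') ^ 2 + ‖x' - y'‖ ^ 2)) y
          (EuclideanSpace.single j 1))
        =ᶠ[nhds x] (fun x' => -(((f x' - g y) * Lg (EuclideanSpace.single j 1)
            + ⟪x' - y, EuclideanSpace.single j 1⟫)
          / Real.sqrt ((f x' - g y) ^ 2 + ‖x' - y‖ ^ 2))) := by
      filter_upwards [hWopen.mem_nhds hxW] with z hz
      exact inner_deriv_formula f g y Lg hLg z hz.2 j
    rw [heq.fderiv_eq]
    rw [outer_deriv_formula f (g y) y x Lf hLf hlt (Lg (EuclideanSpace.single j 1)) j i]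
  -- Step 2: matrix identity
  set A : Matrix (Fin n) (Fin 2) ℝ :=
    Matrix.of (fun i k => if k = 0 then a i else -((s * a i + q i) / D)) with hAdef
  set B : Matrix (Fin 2) (Fin n) ℝ :=
    Matrix.of (fun k j => if k = 0 then b j else s * b j + q j) with hBdef
  have hMat : (Matrix.of fun i j : Fin n =>
      fderiv ℝ (fun x' => fderiv ℝ
          (fun y' => Real.sqrt ((f x' - g y') ^ 2 + ‖x' - y'‖ ^ 2)) y
          (EuclideanSpace.single j 1)) x (EuclideanSpace.single i 1))
      = (-r⁻¹) • (1 + A * B) := by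
    ext i j
    rw [Matrix.of_apply, hM i j]
    simp only [Matrix.smul_apply, Matrix.add_apply, Matrix.one_apply, Matrix.mul_apply,
      Fin.sum_univ_two, hAdef, hBdef, Matrix.of_apply, if_true, if_neg (by norm_num : ¬(1:Fin 2) = 0),
      smul_eq_mul]
    ring
  rw [hMat, Matrix.det_smul, Matrix.det_one_add_mul_comm]
  -- Step 3: compute the 2×2 determinant
  set T : ℝ := ∑ i, b i * a i with hTdef
  set Ka : ℝ := ∑ i, q i * a i with hKadef
  set Kb : ℝ := ∑ i, q i * b i with hKbdef
  set Q : ℝ := ∑ i, q i * q i with hQdef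
  have hxyq : ∀ i, (x - y) i = q i := by
    intro i
    simp [hqdef, EuclideanSpace.inner_single_right]
  have hQnorm : Q = ‖x - y‖ ^ 2 := by
    rw [hQdef, ← real_inner_self_eq_norm_sq]
    have h := clm_eval_sum (innerSL ℝ (x - y)) (x - y)
    simp only [innerSL_apply_apply] at h
    rw [h]
    refine Finset.sum_congr rfl fun i _ => ?_
    rw [hxyq i]
  have hKagrad : Ka = ⟪x - y, gradient f x⟫ := by
    rw [grad_eval, ← hLfdef, clm_eval_sum Lf (x - y)]
    refine Finset.sum_congr rfl fun i _ => ?_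
    simp [hqdef, hadef, EuclideanSpace.inner_single_right]
  have hKbgrad : Kb = ⟪x - y, gradient g y⟫ := by
    rw [grad_eval, ← hLgdef, clm_eval_sum Lg (x - y)]
    refine Finset.sum_congr rfl fun i _ => ?_
    simp [hqdef, hbdef, EuclideanSpace.inner_single_right]
  have hdet2 : Matrix.det (1 + B * A) = (s - Ka) * (s - Kb) / D := by
    have e00 : (B * A) 0 0 = T := by
      rw [Matrix.mul_apply]
      refine Finset.sum_congr rfl fun i _ => ?_
      simp [hAdef, hBdef]
    have e01 : (B * A) 0 1 = -((s * T + Kb) / D) := by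
      rw [Matrix.mul_apply]
      have : ∀ i ∈ Finset.univ, B 0 i * A i 1
          = -(s * (b i * a i)) / D + -(q i * b i) / D := by
        intro i _
        simp only [hAdef, hBdef, Matrix.of_apply, if_true,
          if_neg (by norm_num : ¬(1:Fin 2) = 0)]
        field_simp
        ring
      rw [Finset.sum_congr rfl this, Finset.sum_add_distrib]
      simp only [neg_div, Finset.sum_neg_distrib, ← Finset.sum_div, ← Finset.mul_sum]
      rw [← hTdef, ← hKbdef]
      field_simp
      ring
    have e10 : (B * A) 1 0 = s * T + Ka := by
      rw [Matrix.mul_apply]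
      have : ∀ i ∈ Finset.univ, B 1 i * A i 0 = s * (b i * a i) + q i * a i := by
        intro i _
        simp only [hAdef, hBdef, Matrix.of_apply, if_true,
          if_neg (by norm_num : ¬(1:Fin 2) = 0)]
        ring
      rw [Finset.sum_congr rfl this, Finset.sum_add_distrib, ← Finset.mul_sum, ← hTdef, ← hKadef]
    have e11 : (B * A) 1 1 = -((s ^ 2 * T + s * Ka + s * Kb + Q) / D) := by
      rw [Matrix.mul_apply]
      have : ∀ i ∈ Finset.univ, B 1 i * A i 1
          = -(s ^ 2 * (b i * a i)) / D + -(s * (q i * a i)) / D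
            + -(s * (q i * b i)) / D + -(q i * q i) / D := by
        intro i _
        simp only [hAdef, hBdef, Matrix.of_apply, if_true,
          if_neg (by norm_num : ¬(1:Fin 2) = 0)]
        field_simp
        ring
      rw [Finset.sum_congr rfl this]
      simp only [Finset.sum_add_distrib, neg_div, Finset.sum_neg_distrib, ← Finset.sum_div,
        ← Finset.mul_sum]
      rw [← hTdef, ← hKadef, ← hKbdef, ← hQdef]
      field_simp
      ring
    have E00 : ((1 + B * A) : Matrix (Fin 2) (Fin 2) ℝ) 0 0 = 1 + T := by
      rw [Matrix.add_apply, Matrix.one_apply_eq, e00]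
    have E01 : ((1 + B * A) : Matrix (Fin 2) (Fin 2) ℝ) 0 1 = -((s * T + Kb) / D) := by
      rw [Matrix.add_apply, Matrix.one_apply_ne (by decide : (0:Fin 2) ≠ 1), e01, zero_add]
    have E10 : ((1 + B * A) : Matrix (Fin 2) (Fin 2) ℝ) 1 0 = s * T + Ka := by
      rw [Matrix.add_apply, Matrix.one_apply_ne (by decide : (1:Fin 2) ≠ 0), e10, zero_add]
    have E11 : ((1 + B * A) : Matrix (Fin 2) (Fin 2) ℝ) 1 1 = 1 + -((s ^ 2 * T + s * Ka + s * Kb + Q) / D) := by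
      rw [Matrix.add_apply, Matrix.one_apply_eq, e11]
    rw [Matrix.det_fin_two, E00, E01, E10, E11]
    have hDQ : D = s ^ 2 + Q := by rw [hDdef, hQnorm]
    rw [hDQ]
    have hDQ0 : s ^ 2 + Q ≠ 0 := by rw [← hDQ]; exact hDpos.ne'
    field_simp
    ring
  rw [hdet2]
  -- Step 4: nonvanishing
  have hα₁lt : α₁ < 1 := by nlinarith [sq_nonneg α₂]
  have hKa0 := h₂ x hx y hy
  rw [← hKagrad] at hKa0
  have hKa' := abs_le.1 hKa0
  have hKb0 := h₁ x hx y hy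
  rw [← hKbgrad] at hKb0
  have hKb' := abs_le.1 hKb0
  have hsa : s - Ka < 0 := by
    have := hKa'.1
    nlinarith
  have hsb : s - Kb < 0 := by
    have := hKb'.1
    nlinarith
  have hfrac : (s - Ka) * (s - Kb) / D ≠ 0 :=
    (div_ne_zero (mul_ne_zero hsa.ne hsb.ne) hDpos.ne')
  exact mul_ne_zero (pow_ne_zero _ (neg_ne_zero.2 (inv_ne_zero hrpos.ne'))) hfrac
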